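/- arXiv:math/0603596 — 2 statements merged into one kernel-verified Lean document; each statement's English description precedes it below -/
import Mathlib

section
/- Let J be an abelian generalized complex structure on (g,H) with i-eigenspace L ⊂ (g ⊕ g*) ⊗ ℂ, and let π : (g ⊕ g*) ⊗ ℂ → g ⊗ ℂ be the projection onto the first factor. If v ∈ π(L) ∩ π(L̄) (where L̄ is the complex conjugate of L), then v is central in g ⊗ ℂ, i.e. [v,w] = 0 for all w ∈ g ⊗ ℂ. -/
set_option linter.unusedSectionVars false

open scoped TensorProduct

noncomputable section

namespace GKTest

variable {g : Type} [LieRing g] [LieAlgebra ℝ g]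

/-- Auxiliary reindexing: `skip2 i j m` is the `m`-th element (0-indexed) of
`{0,…,k} \ {i,j}` when `i < j`. -/
def skip2 (i j m : ℕ) : ℕ := if m < i then m else if m + 1 < j then m + 1 else m + 2

lemma skip2_le (i j m : ℕ) : skip2 i j m ≤ m + 2 := by
  unfold skip2; split_ifs <;> omega

/-- The argument list `(⁅X i, X j⁆, X₀, …, X̂ᵢ, …, X̂ⱼ, …, X_k)` used in the
Chevalley–Eilenberg formula. -/
def ceArg {k : ℕ} (X : Fin (k + 1) → g) (i j : Fin (k + 1)) : Fin k → g :=
  fun l =>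
    if h : (l : ℕ) = 0 then ⁅X i, X j⁆
    else X ⟨skip2 (i : ℕ) (j : ℕ) ((l : ℕ) - 1), by
      have h1 := skip2_le (i : ℕ) (j : ℕ) ((l : ℕ) - 1)
      have h2 := l.isLt
      omega⟩

/-- The Chevalley–Eilenberg differential of an alternating `k`-form, as a raw function:
`dα(X₀,…,X_k) = ∑_{i<j} (−1)^{i+j} α(⁅X_i,X_j⁆, X₀,…,X̂ᵢ,…,X̂ⱼ,…,X_k)`. -/
def ceD {k : ℕ} (α : g [⋀^Fin k]→ₗ[ℝ] ℝ) (X : Fin (k + 1) → g) : ℝ :=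
  ∑ i : Fin (k + 1), ∑ j : Fin (k + 1),
    if (i : ℕ) < (j : ℕ) then (-1 : ℝ) ^ ((i : ℕ) + (j : ℕ)) * α (ceArg X i j) else 0

lemma upd0 (X Y Z W : g) : Function.update ![X, Y, Z] 0 W = ![W, Y, Z] := by
  funext l; fin_cases l <;> simp [Function.update]

lemma upd1 (X Y Z W : g) : Function.update ![X, Y, Z] 1 W = ![X, W, Z] := by
  funext l; fin_cases l <;> simp [Function.update]

lemma upd2 (X Y Z W : g) : Function.update ![X, Y, Z] 2 W = ![X, Y, W] := by
  funext l; fin_cases l <;> simp [Function.update]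

variable (H : g [⋀^Fin 3]→ₗ[ℝ] ℝ)

lemma H_add2 (X Y : g) (a b : g) :
    H ![X, Y, a + b] = H ![X, Y, a] + H ![X, Y, b] := by
  have h := H.toMultilinearMap.map_update_add ![X, Y, a] 2 a b
  simpa [upd2] using h

lemma H_smul2 (X Y : g) (c : ℝ) (a : g) :
    H ![X, Y, c • a] = c * H ![X, Y, a] := by
  have h := H.toMultilinearMap.map_update_smul ![X, Y, a] 2 c a
  simpa [upd2, smul_eq_mul] using h

lemma H_add0 (X X' Y Z : g) :
    H ![X + X', Y, Z] = H ![X, Y, Z] + H ![X', Y, Z] := by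
  have h := H.toMultilinearMap.map_update_add ![X, Y, Z] 0 X X'
  simpa [upd0] using h

lemma H_smul0 (c : ℝ) (X Y Z : g) :
    H ![c • X, Y, Z] = c * H ![X, Y, Z] := by
  have h := H.toMultilinearMap.map_update_smul ![X, Y, Z] 0 c X
  simpa [upd0, smul_eq_mul] using h

lemma H_add1 (X Y Y' Z : g) :
    H ![X, Y + Y', Z] = H ![X, Y, Z] + H ![X, Y', Z] := by
  have h := H.toMultilinearMap.map_update_add ![X, Y, Z] 1 Y Y'
  simpa [upd1] using h

lemma H_smul1 (c : ℝ) (X Y Z : g) :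
    H ![X, c • Y, Z] = c * H ![X, Y, Z] := by
  have h := H.toMultilinearMap.map_update_smul ![X, Y, Z] 1 c Y
  simpa [upd1, smul_eq_mul] using h

/-- The contraction `ι_Y ι_X H = H(X, Y, ·)` as a linear functional. -/
def hContr (X Y : g) : Module.Dual ℝ g where
  toFun Z := H ![X, Y, Z]
  map_add' a b := H_add2 H X Y a b
  map_smul' c a := by simpa using H_smul2 H X Y c a

@[simp] lemma hContr_apply (X Y Z : g) : hContr H X Y Z = H ![X, Y, Z] := rfl

/-- The dual (second) component of the Courant bracket:
`ad*_X η − ad*_Y ξ + H(X,Y,·)` where `(ad*_X η)(Z) = −η(⁅X,Z⁆)`. -/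
def courantDual (a b : g × Module.Dual ℝ g) : Module.Dual ℝ g :=
  -(b.2 ∘ₗ (LieAlgebra.ad ℝ g a.1 : g →ₗ[ℝ] g)) +
    a.2 ∘ₗ (LieAlgebra.ad ℝ g b.1 : g →ₗ[ℝ] g) + hContr H a.1 b.1

@[simp] lemma courantDual_apply (a b : g × Module.Dual ℝ g) (Z : g) :
    courantDual H a b Z = -(b.2 ⁅a.1, Z⁆) + a.2 ⁅b.1, Z⁆ + H ![a.1, b.1, Z] := by
  simp [courantDual]

/-- The Courant bracket on `g ⊕ g*` (with background closed 3-form `H`), as a bilinear map: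
`⟦(X,ξ),(Y,η)⟧ = (⁅X,Y⁆, ad*_X η − ad*_Y ξ + H(X,Y,·))`. -/
def courant : (g × Module.Dual ℝ g) →ₗ[ℝ] (g × Module.Dual ℝ g) →ₗ[ℝ] (g × Module.Dual ℝ g) :=
  LinearMap.mk₂ ℝ (fun a b => (⁅a.1, b.1⁆, courantDual H a b))
    (fun a a' b => by
      refine Prod.ext (by simp [add_lie]) ?_
      ext Z
      simp [courantDual_apply, add_lie, H_add0, map_add]
      ring)
    (fun c a b => by
      refine Prod.ext (by simp [smul_lie]) ?_
      ext Z
      simp [courantDual_apply, smul_lie, H_smul0, map_smul, smul_eq_mul]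
      ring)
    (fun a b b' => by
      refine Prod.ext (by simp [lie_add]) ?_
      ext Z
      simp [courantDual_apply, lie_add, H_add1, map_add]
      ring)
    (fun c a b => by
      refine Prod.ext (by simp [lie_smul]) ?_
      ext Z
      simp [courantDual_apply, lie_smul, H_smul1, map_smul, smul_eq_mul]
      ring)

@[simp] lemma courant_apply (a b : g × Module.Dual ℝ g) :
    courant H a b = (⁅a.1, b.1⁆, courantDual H a b) := rfl

/-- The natural pairing `⟨(X,ξ),(Y,η)⟩ = ½(η(X) + ξ(Y))` on `g ⊕ g*`. -/
def npair {V : Type} [AddCommGroup V] [Module ℝ V]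
    (a b : V × Module.Dual ℝ V) : ℝ :=
  (b.2 a.1 + a.2 b.1) / 2

/-- The `ℂ`-bilinear extension of an `ℝ`-bilinear map to the complexification. -/
def cxBil {M : Type} [AddCommGroup M] [Module ℝ M]
    (B : M →ₗ[ℝ] M →ₗ[ℝ] M) : (ℂ ⊗[ℝ] M) →ₗ[ℂ] (ℂ ⊗[ℝ] M) →ₗ[ℂ] (ℂ ⊗[ℝ] M) :=
  TensorProduct.curry (((TensorProduct.lift B).baseChange ℂ) ∘ₗ
    (TensorProduct.AlgebraTensorModule.distribBaseChange ℝ ℂ M M).symm.toLinearMap)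

/-- The `i`-eigenspace of the `ℂ`-linear extension of `J` in the complexification. -/
def eigI {M : Type} [AddCommGroup M] [Module ℝ M] (J : M →ₗ[ℝ] M) :
    Submodule ℂ (ℂ ⊗[ℝ] M) :=
  Module.End.eigenspace (J.baseChange ℂ) Complex.I

/-- The `(−i)`-eigenspace (i.e. the complex conjugate of the `i`-eigenspace). -/
def eigIbar {M : Type} [AddCommGroup M] [Module ℝ M] (J : M →ₗ[ℝ] M) :
    Submodule ℂ (ℂ ⊗[ℝ] M) :=
  Module.End.eigenspace (J.baseChange ℂ) (-Complex.I)

/-- A generalized complex structure on a Lie algebra `g` with closed 3-form `H`: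
an `ℝ`-linear `J` on `g ⊕ g*` with `J² = −id`, preserving the natural pairing, whose
`i`-eigenspace in the complexification is closed under the (complexified) Courant bracket. -/
def IsGCS (J : (g × Module.Dual ℝ g) →ₗ[ℝ] (g × Module.Dual ℝ g)) : Prop :=
  (∀ v, J (J v) = -v) ∧
  (∀ u v, npair (J u) (J v) = npair u v) ∧
  (∀ u ∈ eigI J, ∀ v ∈ eigI J, cxBil (courant H) u v ∈ eigI J)

end GKTest

namespace GKTest

/-- An *abelian* generalized complex structure: the Courant bracket (extended
`ℂ`-bilinearly) vanishes identically on the `i`-eigenspace `L`. -/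
def IsAbelianGCS {g : Type} [LieRing g] [LieAlgebra ℝ g] (H : g [⋀^Fin 3]→ₗ[ℝ] ℝ)
    (J : (g × Module.Dual ℝ g) →ₗ[ℝ] (g × Module.Dual ℝ g)) : Prop :=
  IsGCS H J ∧ ∀ u ∈ eigI J, ∀ v ∈ eigI J, cxBil (courant H) u v = 0

section Aux

variable {M : Type} [AddCommGroup M] [Module ℝ M]

lemma cxBil_tmul (B : M →ₗ[ℝ] M →ₗ[ℝ] M) (z w : ℂ) (m n : M) :
    cxBil B (z ⊗ₜ m) (w ⊗ₜ n) = (z * w) ⊗ₜ B m n := by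
  simp [cxBil, TensorProduct.AlgebraTensorModule.distribBaseChange,
    TensorProduct.smul_tmul', mul_comm]

/-- Complex conjugation on the complexification. -/
def conjM : ℂ ⊗[ℝ] M →ₗ[ℝ] ℂ ⊗[ℝ] M :=
  LinearMap.rTensor M (Complex.conjAe.toLinearMap)

@[simp] lemma conjM_tmul (z : ℂ) (m : M) :
    conjM (z ⊗ₜ m) = (starRingEnd ℂ z) ⊗ₜ m := rfl

lemma conjM_conjM (x : ℂ ⊗[ℝ] M) : conjM (conjM x) = x := by
  induction x using TensorProduct.induction_on with
  | zero => simp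
  | tmul z m => simp
  | add a b ha hb => simp [map_add, ha, hb]

lemma conjM_smul (c : ℂ) (x : ℂ ⊗[ℝ] M) :
    conjM (c • x) = (starRingEnd ℂ c) • conjM x := by
  induction x using TensorProduct.induction_on with
  | zero => simp
  | tmul z m => simp [TensorProduct.smul_tmul']
  | add a b ha hb => simp [smul_add, map_add, ha, hb]

lemma conjM_baseChange (J : M →ₗ[ℝ] M) (x : ℂ ⊗[ℝ] M) :
    conjM (J.baseChange ℂ x) = J.baseChange ℂ (conjM x) := by
  induction x using TensorProduct.induction_on with
  | zero => simp
  | tmul z m => simp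
  | add a b ha hb => simp [map_add, ha, hb]

lemma conjM_cxBil (B : M →ₗ[ℝ] M →ₗ[ℝ] M) (x y : ℂ ⊗[ℝ] M) :
    conjM (cxBil B x y) = cxBil B (conjM x) (conjM y) := by
  induction x using TensorProduct.induction_on with
  | zero => simp
  | add a b ha hb => simp [map_add, LinearMap.add_apply, ha, hb]
  | tmul z m =>
    induction y using TensorProduct.induction_on with
    | zero => simp
    | tmul w n => simp [cxBil_tmul]
    | add a b ha hb => simp [map_add, ha, hb]

lemma conjM_mem_eigI {J : M →ₗ[ℝ] M} {x : ℂ ⊗[ℝ] M} (hx : x ∈ eigIbar J) :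
    (conjM x : ℂ ⊗[ℝ] M) ∈ eigI J := by
  rw [eigIbar, Module.End.mem_eigenspace_iff] at hx
  rw [eigI, Module.End.mem_eigenspace_iff]
  rw [← conjM_baseChange, hx, conjM_smul]
  simp

lemma baseChange_sq {J : M →ₗ[ℝ] M} (hJ : ∀ v, J (J v) = -v) (x : ℂ ⊗[ℝ] M) :
    J.baseChange ℂ (J.baseChange ℂ x) = -x := by
  induction x using TensorProduct.induction_on with
  | zero => simp
  | tmul z m => simp [hJ m, TensorProduct.tmul_neg]
  | add a b ha hb => simp [map_add, ha, hb]; abel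

lemma eig_decomp {J : M →ₗ[ℝ] M} (hJ : ∀ v, J (J v) = -v) (w : ℂ ⊗[ℝ] M) :
    ∃ w₁ ∈ eigI J, ∃ w₂ ∈ eigIbar J, w = w₁ + w₂ := by
  set Jc := J.baseChange ℂ
  refine ⟨(1/2 : ℂ) • (w - Complex.I • Jc w), ?_,
    (1/2 : ℂ) • (w + Complex.I • Jc w), ?_, ?_⟩
  · rw [eigI, Module.End.mem_eigenspace_iff]
    rw [map_smul, smul_comm Complex.I]
    congr 1
    rw [map_sub, map_smul, baseChange_sq hJ, smul_sub, smul_smul, Complex.I_mul_I,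
      neg_one_smul, sub_neg_eq_add, smul_neg, sub_neg_eq_add, add_comm]
  · rw [eigIbar, Module.End.mem_eigenspace_iff]
    rw [map_smul, smul_comm (-Complex.I)]
    congr 1
    rw [map_add, map_smul, baseChange_sq hJ, smul_add, smul_smul, neg_mul, Complex.I_mul_I,
      neg_neg, one_smul, smul_neg, neg_smul]
    abel
  · rw [← smul_add]
    have : w - Complex.I • Jc w + (w + Complex.I • Jc w) = (2:ℂ) • w := by
      rw [two_smul]; abel
    rw [this, smul_smul]
    norm_num

end Aux

section Main

variable {g : Type} [LieRing g] [LieAlgebra ℝ g]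

/-- Projection onto the first factor of the complexification. -/
def pic : ℂ ⊗[ℝ] (g × Module.Dual ℝ g) →ₗ[ℂ] ℂ ⊗[ℝ] g :=
  (LinearMap.fst ℝ g (Module.Dual ℝ g)).baseChange ℂ

lemma pic_cxBil (H : g [⋀^Fin 3]→ₗ[ℝ] ℝ) (a b : ℂ ⊗[ℝ] (g × Module.Dual ℝ g)) :
    pic (cxBil (courant H) a b) = ⁅pic a, pic b⁆ := by
  induction a using TensorProduct.induction_on with
  | zero => simp [pic]
  | add a a' ha ha' => simp only [map_add, LinearMap.add_apply, ha, ha', add_lie]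
  | tmul z p =>
    induction b using TensorProduct.induction_on with
    | zero =>
      rw [map_zero, map_zero]
      exact (lie_zero (pic (z ⊗ₜ[ℝ] p)) : ⁅pic (z ⊗ₜ[ℝ] p), (0 : ℂ ⊗[ℝ] g)⁆ = 0).symm
    | add b b' hb hb' =>
      rw [map_add, map_add, hb, hb', map_add]
      exact (lie_add (pic (z ⊗ₜ[ℝ] p)) (pic b) (pic b') :
        ⁅pic (z ⊗ₜ[ℝ] p), pic b + pic b'⁆ = _).symm
    | tmul w q =>
      rw [cxBil_tmul]
      show (z * w) ⊗ₜ (⁅p.1, q.1⁆) = ⁅z ⊗ₜ p.1, w ⊗ₜ q.1⁆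
      rw [LieAlgebra.ExtendScalars.bracket_tmul]

lemma pic_inl (w : ℂ ⊗[ℝ] g) :
    pic ((LinearMap.inl ℝ g (Module.Dual ℝ g)).baseChange ℂ w) = w := by
  rw [pic, ← LinearMap.comp_apply, ← LinearMap.baseChange_comp]
  simp [LinearMap.fst_comp_inl, LinearMap.baseChange_id]

end Main

/-- If `J` is an abelian generalized complex structure on `(g,H)` with
`i`-eigenspace `L`, and `v` lies in `π(L) ∩ π(L̄)` (where `π` is the projection of
`(g ⊕ g*) ⊗ ℂ` onto `g ⊗ ℂ` and `L̄`, the conjugate of `L`, is the `(−i)`-eigenspace),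
then `v` is central in `g ⊗ ℂ`. -/
theorem central_of_mem_pi_L_inter_pi_Lbar
    (g : Type) [LieRing g] [LieAlgebra ℝ g] [FiniteDimensional ℝ g]
    (H : g [⋀^Fin 3]→ₗ[ℝ] ℝ) (hH : ∀ X : Fin 4 → g, ceD H X = 0)
    (J : (g × Module.Dual ℝ g) →ₗ[ℝ] (g × Module.Dual ℝ g))
    (hJ : IsAbelianGCS H J)
    (v : ℂ ⊗[ℝ] g)
    (hv : v ∈ Submodule.map ((LinearMap.fst ℝ g (Module.Dual ℝ g)).baseChange ℂ) (eigI J) ⊓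
            Submodule.map ((LinearMap.fst ℝ g (Module.Dual ℝ g)).baseChange ℂ) (eigIbar J)) :
    ∀ w : ℂ ⊗[ℝ] g, ⁅v, w⁆ = 0 := by
  obtain ⟨⟨a, ha, hav⟩, b, hb, hbv⟩ := hv
  have hav' : pic a = v := hav
  have hbv' : pic b = v := hbv
  intro w
  obtain ⟨w₁, hw₁, w₂, hw₂, hw⟩ := eig_decomp (M := g × Module.Dual ℝ g) hJ.1.1
    ((LinearMap.inl ℝ g (Module.Dual ℝ g)).baseChange ℂ w)
  have hwsum : w = pic w₁ + pic w₂ := by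
    rw [← map_add, ← hw, pic_inl]
  have h1 : ⁅v, pic w₁⁆ = 0 := by
    rw [← hav', ← pic_cxBil H, hJ.2 a ha w₁ hw₁, map_zero]
  have h2 : cxBil (courant H) b w₂ = 0 := by
    have h := hJ.2 _ (conjM_mem_eigI hb) _ (conjM_mem_eigI hw₂)
    rw [← conjM_cxBil] at h
    have h' := congrArg conjM h
    rwa [conjM_conjM, map_zero] at h'
  have h3 : ⁅v, pic w₂⁆ = 0 := by
    rw [← hbv', ← pic_cxBil H, h2, map_zero]
  rw [hwsum]
  calc ⁅v, pic w₁ + pic w₂⁆ = ⁅v, pic w₁⁆ + ⁅v, pic w₂⁆ := lie_add v (pic w₁) (pic w₂)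
    _ = 0 := by rw [h1, h3, add_zero]

end GKTest
end
end

section
/- Let g be a finite-dimensional nilpotent real Lie algebra and H an alternating 3-form on g with dH = 0. Then g ⊕ g* equipped with the Courant bracket ⟦(X,ξ),(Y,η)⟧ = ([X,Y], ad*_X η − ad*_Y ξ + H(X,Y,·)) is a nilpotent Lie algebra. -/
set_option linter.unusedSectionVars false

open scoped TensorProduct

noncomputable section

namespace GKTest


section Helpers

variable {g : Type} [LieRing g] [LieAlgebra ℝ g] (H : g [⋀^Fin 3]→ₗ[ℝ] ℝ)

lemma Hsw01 (a b c : g) : H ![b, a, c] = -H ![a, b, c] := by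
  have h := H.map_swap ![a,b,c] (i := 0) (j := 1) (by decide)
  have e : (![a,b,c] ∘ Equiv.swap (0:Fin 3) 1) = ![b,a,c] := by
    funext l; fin_cases l <;> simp [Equiv.swap_apply_def]
  rw [e] at h; exact h

lemma Hsw12 (a b c : g) : H ![a, c, b] = -H ![a, b, c] := by
  have h := H.map_swap ![a,b,c] (i := 1) (j := 2) (by decide)
  have e : (![a,b,c] ∘ Equiv.swap (1:Fin 3) 2) = ![a,c,b] := by
    funext l; fin_cases l <;> simp [Equiv.swap_apply_def]
  rw [e] at h; exact h

lemma Hcyc (a b c : g) : H ![c, a, b] = H ![a, b, c] := by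
  rw [Hsw01 H a c b, Hsw12]; ring

lemma Hzero1 (a c : g) : H ![a, 0, c] = 0 := by
  have := H_smul1 H (0 : ℝ) a 0 c
  simpa using this

lemma Hzero2 (a b : g) : H ![a, b, 0] = 0 := by
  have := H_smul2 H a b (0 : ℝ) 0
  simpa using this

lemma ceArg01 (v : Fin 4 → g) : ceArg v 0 1 = ![⁅v 0, v 1⁆, v 2, v 3] := by
  funext l; fin_cases l <;> simp [ceArg, skip2] <;> rfl

lemma ceArg02 (v : Fin 4 → g) : ceArg v 0 2 = ![⁅v 0, v 2⁆, v 1, v 3] := by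
  funext l; fin_cases l <;> simp [ceArg, skip2] <;> rfl

lemma ceArg03 (v : Fin 4 → g) : ceArg v 0 3 = ![⁅v 0, v 3⁆, v 1, v 2] := by
  funext l; fin_cases l <;> simp [ceArg, skip2] <;> rfl

lemma ceArg12 (v : Fin 4 → g) : ceArg v 1 2 = ![⁅v 1, v 2⁆, v 0, v 3] := by
  funext l; fin_cases l <;> simp [ceArg, skip2] <;> rfl

lemma ceArg13 (v : Fin 4 → g) : ceArg v 1 3 = ![⁅v 1, v 3⁆, v 0, v 2] := by
  funext l; fin_cases l <;> simp [ceArg, skip2] <;> rfl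

lemma ceArg23 (v : Fin 4 → g) : ceArg v 2 3 = ![⁅v 2, v 3⁆, v 0, v 1] := by
  funext l; fin_cases l <;> simp [ceArg, skip2] <;> rfl

lemma dH_expand (hH : ∀ X : Fin 4 → g, ceD H X = 0) (X Y Z W : g) :
    H ![⁅X,Y⁆,Z,W] - H ![⁅X,Z⁆,Y,W] + H ![⁅X,W⁆,Y,Z]
      + H ![⁅Y,Z⁆,X,W] - H ![⁅Y,W⁆,X,Z] + H ![⁅Z,W⁆,X,Y] = 0 := by
  have h := hH ![X, Y, Z, W]
  simp only [ceD, Fin.sum_univ_succ, Finset.sum_empty, Fin.sum_univ_zero] at h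
  norm_num [show (2:Fin 3).succ = 3 from rfl, show (((3:Fin 4)):ℕ) = 3 from rfl, ceArg01, ceArg02, ceArg03, ceArg12, ceArg13, ceArg23, show (![X,Y,Z,W] 2) = Z from rfl, show (![X,Y,Z,W] 3) = W from rfl] at h
  linarith

end Helpers


lemma Hneg0 {g : Type} [LieRing g] [LieAlgebra ℝ g] (H : g [⋀^Fin 3]→ₗ[ℝ] ℝ)
    (u v w : g) : H ![-u, v, w] = -H ![u, v, w] := by
  have := H_smul0 H (-1) u v w
  simpa using this

/-- If `g` is a finite-dimensional nilpotent real Lie algebra and `H` a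
closed 3-form on `g`, then `g ⊕ g*` with the Courant bracket is a nilpotent Lie algebra:
the bracket is antisymmetric, satisfies the Jacobi identity, and some iterated bracket
length is identically zero. -/
theorem courant_nilpotent_of_nilpotent
    (g : Type) [LieRing g] [LieAlgebra ℝ g] [FiniteDimensional ℝ g]
    [LieModule.IsNilpotent g g]
    (H : g [⋀^Fin 3]→ₗ[ℝ] ℝ) (hH : ∀ X : Fin 4 → g, ceD H X = 0) :
    (∀ a b : g × Module.Dual ℝ g, courant H a b = -courant H b a) ∧
    (∀ a b c : g × Module.Dual ℝ g,
      courant H (courant H a b) c + courant H (courant H b c) a +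
        courant H (courant H c a) b = 0) ∧
    (∃ n : ℕ, ∀ (a : Fin n → g × Module.Dual ℝ g) (x : g × Module.Dual ℝ g),
      (List.ofFn a).foldr (fun u w => courant H u w) x = 0) := by
  refine ⟨?_, ?_, ?_⟩
  · intro a b
    refine Prod.ext ?_ ?_
    · simp only [courant_apply, Prod.fst_neg]
      rw [← lie_skew]
    · ext Z
      simp only [courant_apply, Prod.snd_neg, LinearMap.neg_apply, courantDual_apply]
      rw [Hsw01 H b.1 a.1 Z]
      ring
  · intro a b c
    refine Prod.ext ?_ ?_
    · simp only [courant_apply, Prod.fst_add, Prod.fst_zero]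
      rw [← lie_skew ⁅a.1, b.1⁆ c.1, ← lie_skew ⁅b.1, c.1⁆ a.1, ← lie_skew ⁅c.1, a.1⁆ b.1]
      have h := lie_jacobi c.1 a.1 b.1
      rw [← neg_add, ← neg_add, h, neg_zero]
    · ext Z
      simp only [courant_apply, Prod.snd_add, Prod.snd_zero, LinearMap.add_apply,
        LinearMap.zero_apply, courantDual_apply]
      rw [show ⁅c.1, a.1⁆ = -⁅a.1, c.1⁆ from (lie_skew c.1 a.1).symm]
      simp only [lie_lie, neg_lie, lie_neg, map_sub, map_neg, Hneg0,
        ← Hcyc H a.1 b.1 ⁅c.1, Z⁆, ← Hcyc H b.1 c.1 ⁅a.1, Z⁆, ← Hcyc H c.1 a.1 ⁅b.1, Z⁆]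
      rw [show H ![⁅b.1, Z⁆, c.1, a.1] = -H ![⁅b.1, Z⁆, a.1, c.1] from by rw [Hsw12]]
      linear_combination dH_expand H hH a.1 b.1 c.1 Z
  · obtain ⟨m, hm⟩ := LieModule.IsNilpotent.nilpotent ℝ g g
    have fst_mem : ∀ (l : List (g × Module.Dual ℝ g)) (x : g × Module.Dual ℝ g),
        (l.foldr (fun u w => courant H u w) x).1 ∈ LieModule.lowerCentralSeries ℝ g g l.length := by
      intro l
      induction l with
      | nil => intro x; simp
      | cons a l ih =>
        intro x
        rw [List.foldr_cons, courant_apply]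
        show ⁅a.1, _⁆ ∈ LieModule.lowerCentralSeries ℝ g g (l.length + 1)
        rw [LieModule.lowerCentralSeries_succ]
        exact LieSubmodule.lie_mem_lie (LieSubmodule.mem_top a.1) (ih x)
    have fst_zero : ∀ (l : List (g × Module.Dual ℝ g)) (x : g × Module.Dual ℝ g),
        m ≤ l.length → (l.foldr (fun u w => courant H u w) x).1 = 0 := by
      intro l x hl
      have h1 := fst_mem l x
      have h2 : LieModule.lowerCentralSeries ℝ g g l.length ≤
          LieModule.lowerCentralSeries ℝ g g m :=
        LieModule.antitone_lowerCentralSeries ℝ g g hl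
      have h3 := h2 h1
      rw [hm] at h3
      simpa using h3
    have snd_zero : ∀ (l : List (g × Module.Dual ℝ g)) (x : g × Module.Dual ℝ g) (Z : g),
        m ≤ l.length → Z ∈ LieModule.lowerCentralSeries ℝ g g (2 * m - l.length) →
        (l.foldr (fun u w => courant H u w) x).2 Z = 0 := by
      intro l
      induction l with
      | nil =>
        intro x Z hm0 hZ
        have hle : m ≤ 2 * m - ([] : List (g × Module.Dual ℝ g)).length := by
          simp; omega
        have h2 := LieModule.antitone_lowerCentralSeries ℝ g g hle hZ
        rw [hm] at h2
        have hZ0 : Z = 0 := by simpa using h2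
        simp [hZ0]
      | cons a l ih =>
        intro x Z hml hZ
        rw [List.foldr_cons, courant_apply]
        show courantDual H a (List.foldr (fun u w => courant H u w) x l) Z = 0
        rw [courantDual_apply]
        have elen : (a :: l).length = l.length + 1 := rfl
        by_cases hc : m ≤ l.length
        · have h2 : ⁅a.1, Z⁆ ∈ LieModule.lowerCentralSeries ℝ g g (2 * m - l.length) := by
            rcases Nat.eq_zero_or_pos (2 * m - l.length) with h | h
            · rw [h]; simp
            · have e : 2 * m - l.length = (2 * m - (a :: l).length) + 1 := by omega
              rw [e, LieModule.lowerCentralSeries_succ]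
              exact LieSubmodule.lie_mem_lie (LieSubmodule.mem_top a.1) hZ
          rw [fst_zero l x hc, ih x ⁅a.1, Z⁆ hc h2]
          simp [Hzero1]
        · have e : 2 * m - (a :: l).length = m := by omega
          rw [e, hm] at hZ
          have hZ0 : Z = 0 := by simpa using hZ
          simp [hZ0, Hzero2]
    refine ⟨2 * m + 1, fun a x => ?_⟩
    have hlen : (List.ofFn a).length = 2 * m + 1 := by simp
    refine Prod.ext ?_ ?_
    · rw [fst_zero (List.ofFn a) x (by omega)]
      rfl
    · ext Z
      rw [snd_zero (List.ofFn a) x Z (by omega) (by simp [hlen])]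
      rfl
end GKTest
end
end
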